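/- Suppose the discrete quantities satisfy the structure update η^{n+1/3} − ηⁿ = Δt·v^{n+1/3} in L²(Γ) and ∫_Γ (v^{n+1/3} − vⁿ) ψ dz + Δt ∫_Γ ∇η^{n+1/3} · ∇ψ dz = 0 for all ψ ∈ H₀¹(Γ), with v^{n+1/3} ∈ H₀¹(Γ). Then the discrete energy identity holds: (1/2)(‖v^{n+1/3}‖²_{L²} + ‖∇η^{n+1/3}‖²_{L²}) + (1/2)(‖v^{n+1/3} − vⁿ‖²_{L²} + ‖∇η^{n+1/3} − ∇ηⁿ‖²_{L²}) = (1/2)(‖vⁿ‖²_{L²} + ‖∇ηⁿ‖²_{L²}). -/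
import Mathlib

open scoped RealInnerProductSpace

/-- Discrete energy identity for the structure subproblem: if
`η^{n+1/3} − ηⁿ = Δt·v^{n+1/3}` and
`∫(v^{n+1/3} − vⁿ)ψ + Δt ∫ ∇η^{n+1/3}·∇ψ = 0` for all `ψ ∈ H₀¹(Γ)`, then
`(1/2)(‖v^{n+1/3}‖² + ‖∇η^{n+1/3}‖²) + (1/2)(‖v^{n+1/3} − vⁿ‖² + ‖∇η^{n+1/3} − ∇ηⁿ‖²)
  = (1/2)(‖vⁿ‖² + ‖∇ηⁿ‖²)`.
Here `V = H₀¹(Γ)`, `L = L²(Γ)`, `ι` the embedding and `grad` the gradient. -/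
theorem stmt6 {V L : Type*}
    [NormedAddCommGroup V] [InnerProductSpace ℝ V]
    [NormedAddCommGroup L] [InnerProductSpace ℝ L]
    (ι : V →L[ℝ] L) (grad : V →L[ℝ] L)
    (Δt : ℝ) (hΔt : 0 < Δt)
    (ηn ηthird vthird : V) (vn : L)
    (hupdate : ηthird - ηn = Δt • vthird)
    (hweak : ∀ ψ : V, ⟪ι vthird - vn, ι ψ⟫ + Δt * ⟪grad ηthird, grad ψ⟫ = 0) :
    (1 / 2) * (‖ι vthird‖ ^ 2 + ‖grad ηthird‖ ^ 2)
      + (1 / 2) * (‖ι vthird - vn‖ ^ 2 + ‖grad ηthird - grad ηn‖ ^ 2)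
      = (1 / 2) * (‖vn‖ ^ 2 + ‖grad ηn‖ ^ 2) := by
  have hg : grad ηthird - grad ηn = Δt • grad vthird := by
    rw [← map_sub, hupdate, map_smul]
  have h := hweak vthird
  have h1 : ⟪ι vthird - vn, ι vthird⟫ + ⟪grad ηthird, grad ηthird - grad ηn⟫ = 0 := by
    rw [hg, real_inner_smul_right]; linarith
  have e1 : ‖ι vthird - vn‖ ^ 2 = ‖ι vthird‖ ^ 2 - 2 * ⟪ι vthird, vn⟫ + ‖vn‖ ^ 2 :=
    norm_sub_sq_real _ _
  have e2 : ‖grad ηthird - grad ηn‖ ^ 2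
      = ‖grad ηthird‖ ^ 2 - 2 * ⟪grad ηthird, grad ηn⟫ + ‖grad ηn‖ ^ 2 :=
    norm_sub_sq_real _ _
  have h2 : ⟪ι vthird - vn, ι vthird⟫
      = ‖ι vthird‖ ^ 2 - ⟪ι vthird, vn⟫ := by
    rw [inner_sub_left, real_inner_self_eq_norm_sq, real_inner_comm]
  have h3 : ⟪grad ηthird, grad ηthird - grad ηn⟫
      = ‖grad ηthird‖ ^ 2 - ⟪grad ηthird, grad ηn⟫ := by
    rw [inner_sub_right, real_inner_self_eq_norm_sq]
  linarith
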